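/- Let H be a complex Hilbert space, let K : H → H be a bounded self-adjoint operator, let b ∈ H, let a₀₀ ∈ ℝ, and let λ ∈ ℝ with λ not in the spectrum of K. On the Hilbert space ℂ × H (with inner product ⟨(x₀, y), (x₀', y')⟩ = x₀ · conj(x₀') + ⟨y, y'⟩), define the bounded linear operator A by A(x₀, y) := (a₀₀ x₀ + ⟨y, b⟩, x₀ b + K y). Then A has a nonzero vector v with A v = λ v if and only if λ − a₀₀ − ⟨(λI − K)^{−1} b, b⟩ = 0; and in that case the set of solutions v of A v = λ v is exactly the one-dimensional subspace spanned by (1, (λI − K)^{−1} b). -/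

import Mathlib

set_option maxHeartbeats 1000000


/-- Schur complement criterion. On `ℂ × H`, with `A(x₀,y) = (a₀₀x₀ + ⟨y,b⟩, x₀b + Ky)`
(inner products linear in the first argument, i.e. `⟨y,b⟩ = ⟪b,y⟫` in Mathlib's
convention), and `λ ∉ spec(K)`, the equation `Av = λv` has a nonzero solution iff
`λ − a₀₀ − ⟨(λI−K)⁻¹b, b⟩ = 0`, in which case the solution set is exactly the
span of `(1, (λI−K)⁻¹b)`. -/
theorem stmt14 {H : Type*} [NormedAddCommGroup H] [InnerProductSpace ℂ H]
    [CompleteSpace H] (K : H →L[ℂ] H) (hK : IsSelfAdjoint K) (b : H)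
    (a₀₀ : ℝ) (lam : ℝ) (hlam : (lam : ℂ) ∉ spectrum ℂ K) :
    ((∃ v : ℂ × H, v ≠ 0 ∧
        ((a₀₀ : ℂ) * v.1 + (inner ℂ b v.2 : ℂ), v.1 • b + K v.2) = (lam : ℂ) • v) ↔
      (lam : ℂ) - (a₀₀ : ℂ)
          - (inner ℂ b ((Ring.inverse ((lam : ℂ) • (1 : H →L[ℂ] H) - K)) b) : ℂ) = 0) ∧
    ((lam : ℂ) - (a₀₀ : ℂ)
          - (inner ℂ b ((Ring.inverse ((lam : ℂ) • (1 : H →L[ℂ] H) - K)) b) : ℂ) = 0 →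
      {v : ℂ × H | ((a₀₀ : ℂ) * v.1 + (inner ℂ b v.2 : ℂ), v.1 • b + K v.2) = (lam : ℂ) • v}
        = (Submodule.span ℂ
            {((1 : ℂ), (Ring.inverse ((lam : ℂ) • (1 : H →L[ℂ] H) - K)) b)} : Set (ℂ × H))) := by
  set L : H →L[ℂ] H := (lam : ℂ) • (1 : H →L[ℂ] H) - K with hLdef
  have hu : IsUnit L := by
    have := spectrum.notMem_iff.mp hlam
    rwa [Algebra.algebraMap_eq_smul_one] at this
  set R : H →L[ℂ] H := Ring.inverse L with hRdef
  have hRL : R * L = 1 := Ring.inverse_mul_cancel _ hu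
  have hLR : L * R = 1 := Ring.mul_inverse_cancel _ hu
  -- L (R b) = b
  have hLRb : (lam : ℂ) • (R b) - K (R b) = b := by
    have : (L * R) b = b := by rw [hLR]; rfl
    simpa [hLdef, ContinuousLinearMap.sub_apply, ContinuousLinearMap.smul_apply,
      ContinuousLinearMap.mul_apply] using this
  have key : ∀ (c : ℂ) (y : H), c • b + K y = (lam : ℂ) • y ↔ y = c • R b := by
    intro c y
    constructor
    · intro h
      have hLy : L y = c • b := by
        simp only [hLdef, ContinuousLinearMap.sub_apply, ContinuousLinearMap.smul_apply,
          ContinuousLinearMap.one_apply]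
        rw [← h]; abel
      have : (R * L) y = y := by rw [hRL]; rfl
      calc y = R (L y) := this.symm
        _ = c • R b := by rw [hLy, map_smul]
    · rintro rfl
      rw [map_smul, smul_comm (lam : ℂ) c]
      rw [← smul_add]
      congr 1
      exact (sub_eq_iff_eq_add.mp hLRb).symm
  have hmem : ∀ v : ℂ × H,
      ((a₀₀ : ℂ) * v.1 + (inner ℂ b v.2 : ℂ), v.1 • b + K v.2) = (lam : ℂ) • v ↔
      (v.2 = v.1 • R b ∧ (a₀₀ : ℂ) * v.1 + v.1 * (inner ℂ b (R b) : ℂ) = (lam : ℂ) * v.1) := by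
    intro v
    rw [Prod.ext_iff]
    constructor
    · rintro ⟨h1, h2⟩
      have hy := (key v.1 v.2).mp h2
      refine ⟨hy, ?_⟩
      rw [hy, inner_smul_right] at h1
      rw [Prod.smul_fst, smul_eq_mul] at h1
      exact h1
    · rintro ⟨hy, h1⟩
      refine ⟨?_, (key v.1 v.2).mpr hy⟩
      rw [hy, inner_smul_right, Prod.smul_fst, smul_eq_mul]
      exact h1
  constructor
  · constructor
    · rintro ⟨v, hv0, hv⟩
      obtain ⟨hy, h1⟩ := (hmem v).mp hv
      have hx : v.1 ≠ 0 := by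
        intro hx0
        apply hv0
        have : v.2 = 0 := by rw [hy, hx0, zero_smul]
        exact Prod.ext hx0 this
      have : v.1 * ((lam : ℂ) - (a₀₀ : ℂ) - (inner ℂ b (R b) : ℂ)) = 0 := by
        linear_combination -h1
      rcases mul_eq_zero.mp this with h | h
      · exact absurd h hx
      · exact h
    · intro hs
      refine ⟨((1 : ℂ), R b), ?_, ?_⟩
      · intro h
        have : (1 : ℂ) = 0 := congrArg Prod.fst h
        exact one_ne_zero this
      · refine (hmem _).mpr ⟨by simp, ?_⟩
        simp only
        linear_combination -hs
  · intro hs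
    ext v
    rw [Set.mem_setOf_eq, hmem v, SetLike.mem_coe, Submodule.mem_span_singleton]
    constructor
    · rintro ⟨hy, -⟩
      exact ⟨v.1, by rw [Prod.smul_mk, smul_eq_mul, mul_one, ← hy]⟩
    · rintro ⟨c, hc⟩
      have h1 : v.1 = c := by rw [← hc]; simp
      have h2 : v.2 = c • R b := by rw [← hc]; rfl
      refine ⟨by rw [h1, h2], ?_⟩
      rw [h1]
      linear_combination -c * hs
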